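/- Let ρ and σ be positive semidefinite matrices of the same size and let {W_d}_{d∈D} be a finite family of matrices with ∑_{d∈D} W_d = id. Then ∑_{d∈D} F(W_d† · ρ · W_d, σ) ≥ F(ρ, σ). -/

import Mathlib

open scoped BigOperators ComplexOrder
open Matrix Filter MeasureTheory

noncomputable section

namespace QMarkov

variable {ι : Type*}

/-- Positive semidefinite square root of a matrix (junk value `0` if not PSD). -/
noncomputable def matSqrt [Fintype ι] (A : Matrix ι ι ℂ) : Matrix ι ι ℂ := by
  classical exact if h : A.PosSemidef then
    (h.1.eigenvectorUnitary : Matrix ι ι ℂ) *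
      Matrix.diagonal (fun i => ((Real.sqrt (h.1.eigenvalues i) : ℝ) : ℂ)) *
      (star (h.1.eigenvectorUnitary : Matrix ι ι ℂ))
    else 0

/-- Trace norm (sum of singular values). -/
noncomputable def traceNorm [Fintype ι] (A : Matrix ι ι ℂ) : ℝ :=
  (matSqrt (Aᴴ * A)).trace.re

/-- Fidelity `F(ρ,σ) = ‖√ρ √σ‖₁`. -/
noncomputable def fid [Fintype ι] (ρ σ : Matrix ι ι ℂ) : ℝ :=
  traceNorm (matSqrt ρ * matSqrt σ)

/-- Generalized trace distance `Δ(ρ,σ) = ½‖ρ-σ‖₁ + ½|tr(ρ-σ)|`. -/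
noncomputable def tdist [Fintype ι] (ρ σ : Matrix ι ι ℂ) : ℝ :=
  (1 / 2) * traceNorm (ρ - σ) + (1 / 2) * ‖(ρ - σ).trace‖

/-- Von Neumann entropy `H(ρ) = -∑ᵢ λᵢ log₂ λᵢ` (junk `0` if not Hermitian);
the convention `0 · log₂ 0 = 0` is automatic since `Real.logb 2 0 = 0`. -/
noncomputable def vnEntropy [Fintype ι] (A : Matrix ι ι ℂ) : ℝ := by
  classical exact
    if h : A.IsHermitian then -∑ i, h.eigenvalues i * Real.logb 2 (h.eigenvalues i) else 0

/-- Matrix base-2 logarithm on the support of a Hermitian matrix (junk `0` if not Hermitian). -/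
noncomputable def mlog [Fintype ι] (A : Matrix ι ι ℂ) : Matrix ι ι ℂ := by
  classical exact
    if h : A.IsHermitian then
      (h.eigenvectorUnitary : Matrix ι ι ℂ) *
        Matrix.diagonal (fun i => (Real.logb 2 (h.eigenvalues i) : ℂ)) *
        (h.eigenvectorUnitary : Matrix ι ι ℂ)ᴴ
    else 0

/-- Square root of the Moore–Penrose pseudoinverse of a Hermitian PSD matrix
(junk `0` if not Hermitian). -/
noncomputable def pinvSqrt [Fintype ι] (A : Matrix ι ι ℂ) : Matrix ι ι ℂ := by
  classical exact
    if h : A.IsHermitian then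
      (h.eigenvectorUnitary : Matrix ι ι ℂ) *
        Matrix.diagonal (fun i => ((Real.sqrt (h.eigenvalues i))⁻¹ : ℂ)) *
        (h.eigenvectorUnitary : Matrix ι ι ℂ)ᴴ
    else 0

/-- Relative entropy `D(ρ‖σ)`, equal to `tr(ρ(log₂ρ - log₂σ))/tr ρ` when the support of
`ρ` is contained in the support of `σ`, and `+∞` otherwise. -/
noncomputable def relEnt [Fintype ι] (ρ σ : Matrix ι ι ℂ) : EReal := by
  classical exact
    if ∀ v : ι → ℂ, σ *ᵥ v = 0 → ρ *ᵥ v = 0 then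
      (((ρ * (mlog ρ - mlog σ)).trace.re / ρ.trace.re : ℝ) : EReal)
    else ⊤

/-- `n`-fold tensor power of a matrix. -/
def tpow (A : Matrix ι ι ℂ) (n : ℕ) : Matrix (Fin n → ι) (Fin n → ι) ℂ :=
  Matrix.of fun x y => ∏ i, A (x i) (y i)

/-- Permutation invariance of a matrix on an `n`-fold tensor power space. -/
def permInv {n : ℕ} (ρ : Matrix (Fin n → ι) (Fin n → ι) ℂ) : Prop :=
  ∀ π : Equiv.Perm (Fin n), ∀ x y, ρ (x ∘ π) (y ∘ π) = ρ x y

/-- Rank-one projector `|φ⟩⟨φ|`. -/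
def vecOuter (φ : ι → ℂ) : Matrix ι ι ℂ :=
  Matrix.of fun i j => φ i * star (φ j)

variable {A B C D E : Type*}

/-- Partial trace over the second factor. -/
def ptr2 [Fintype E] (M : Matrix (D × E) (D × E) ℂ) : Matrix D D ℂ :=
  Matrix.of fun d d' => ∑ e, M (d, e) (d', e)

/-- Partial trace over the `n` copies of `E` of a matrix on `(D ⊗ E)^⊗n`. -/
def ptrPow [Fintype E] {n : ℕ} (M : Matrix (Fin n → D × E) (Fin n → D × E) ℂ) :
    Matrix (Fin n → D) (Fin n → D) ℂ :=
  Matrix.of fun x y => ∑ e : Fin n → E, M (fun i => (x i, e i)) (fun i => (y i, e i))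

/-- Marginal `ρ_AB` of a tripartite matrix. -/
def margAB [Fintype C] (ρ : Matrix (A × B × C) (A × B × C) ℂ) : Matrix (A × B) (A × B) ℂ :=
  Matrix.of fun x y => ∑ c, ρ (x.1, x.2, c) (y.1, y.2, c)

/-- Marginal `ρ_BC` of a tripartite matrix. -/
def margBC [Fintype A] (ρ : Matrix (A × B × C) (A × B × C) ℂ) : Matrix (B × C) (B × C) ℂ :=
  Matrix.of fun x y => ∑ a, ρ (a, x.1, x.2) (a, y.1, y.2)

/-- Marginal `ρ_B` of a tripartite matrix. -/
def margB [Fintype A] [Fintype C] (ρ : Matrix (A × B × C) (A × B × C) ℂ) : Matrix B B ℂ :=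
  Matrix.of fun b b' => ∑ a, ∑ c, ρ (a, b, c) (a, b', c)

/-- Conditional mutual information `I(A:C|B)_ρ = H(ρ_AB) + H(ρ_BC) - H(ρ_B) - H(ρ_ABC)`. -/
noncomputable def cmi [Fintype A] [Fintype B] [Fintype C]
    (ρ : Matrix (A × B × C) (A × B × C) ℂ) : ℝ :=
  vnEntropy (margAB ρ) + vnEntropy (margBC ρ) - vnEntropy (margB ρ) - vnEntropy ρ

/-- Application of `I_A ⊗ T` to a matrix on `A ⊗ B`, for `T` a map from matrices over `B`
to matrices over `B ⊗ C`. -/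
def extT (T : Matrix B B ℂ → Matrix (B × C) (B × C) ℂ)
    (ρ : Matrix (A × B) (A × B) ℂ) : Matrix (A × B × C) (A × B × C) ℂ :=
  Matrix.of fun x y => T (Matrix.of fun b b' => ρ (x.1, b) (y.1, b')) x.2 y.2

/-- `M ⊗ id` on `B ⊗ C`. -/
def kronId (M : Matrix B B ℂ) : Matrix (B × C) (B × C) ℂ := by
  classical exact Matrix.of fun x y => if x.2 = y.2 then M x.1 y.1 else 0

end QMarkov

namespace QMarkov
variable {A B C : Type*}

/-- Marginal on the first and third factors of a tripartite matrix. -/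
def marg13 [Fintype B] (ρ : Matrix (A × B × C) (A × B × C) ℂ) : Matrix (A × C) (A × C) ℂ :=
  Matrix.of fun x y => ∑ b, ρ (x.1, b, x.2) (y.1, b, y.2)

/-- Marginal on the third factor of a tripartite matrix. -/
def marg3 [Fintype A] [Fintype B] (ρ : Matrix (A × B × C) (A × B × C) ℂ) : Matrix C C ℂ :=
  Matrix.of fun c c' => ∑ a, ∑ b, ρ (a, b, c) (a, b, c')

/-- Conditional mutual information `I(first : second | third)` of a tripartite matrix, i.e.
for `ρ` on `A ⊗ C ⊗ E` this is `I(A:C|E)_ρ = H(ρ_AE) + H(ρ_CE) - H(ρ_E) - H(ρ_ACE)`. -/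
noncomputable def cmi13 [Fintype A] [Fintype B] [Fintype C]
    (ρ : Matrix (A × B × C) (A × B × C) ℂ) : ℝ :=
  vnEntropy (marg13 ρ) + vnEntropy (margBC ρ) - vnEntropy (marg3 ρ) - vnEntropy ρ

end QMarkov
namespace QMarkov

/-- Positive semidefinite square root (local replacement of the former Mathlib definition). -/
noncomputable def _root_.Matrix.PosSemidef.sqrt {ι : Type*} [Fintype ι] [DecidableEq ι]
    {A : Matrix ι ι ℂ} (h : A.PosSemidef) : Matrix ι ι ℂ :=
  (h.1.eigenvectorUnitary : Matrix ι ι ℂ) *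
    Matrix.diagonal (fun i => ((Real.sqrt (h.1.eigenvalues i) : ℝ) : ℂ)) *
    (star (h.1.eigenvectorUnitary : Matrix ι ι ℂ))

theorem _root_.Matrix.PosSemidef.posSemidef_sqrt {ι : Type*} [Fintype ι] [DecidableEq ι]
    {A : Matrix ι ι ℂ} (h : A.PosSemidef) : h.sqrt.PosSemidef := by
  unfold Matrix.PosSemidef.sqrt
  rw [Matrix.star_eq_conjTranspose]
  refine (Matrix.posSemidef_diagonal_iff.mpr fun i => ?_).mul_mul_conjTranspose_same _
  exact Complex.zero_le_real.mpr (Real.sqrt_nonneg _)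

theorem _root_.Matrix.PosSemidef.sqrt_mul_self {ι : Type*} [Fintype ι] [DecidableEq ι]
    {A : Matrix ι ι ℂ} (h : A.PosSemidef) : h.sqrt * h.sqrt = A := by
  have hUU : star (h.1.eigenvectorUnitary : Matrix ι ι ℂ) * (h.1.eigenvectorUnitary : Matrix ι ι ℂ)
      = 1 := Unitary.coe_star_mul_self _
  unfold Matrix.PosSemidef.sqrt
  conv_rhs => rw [h.1.spectral_theorem, Unitary.conjStarAlgAut_apply]
  simp only [Matrix.mul_assoc]
  rw [← Matrix.mul_assoc (star _) (h.1.eigenvectorUnitary : Matrix ι ι ℂ), hUU, Matrix.one_mul,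
    ← Matrix.mul_assoc (Matrix.diagonal _) (Matrix.diagonal _), Matrix.diagonal_mul_diagonal]
  congr 3
  funext i
  rw [← Complex.ofReal_mul, Real.mul_self_sqrt (h.eigenvalues_nonneg i)]
  rfl

section TraceNormTools

variable {ι : Type*} [Fintype ι] [DecidableEq ι]

private lemma dot_re_le (u v : ι → ℂ) :
    (dotProduct (star u) v).re ≤
      Real.sqrt (dotProduct (star u) u).re * Real.sqrt (dotProduct (star v) v).re := by
  have h := re_inner_le_norm (𝕜 := ℂ)
    ((WithLp.equiv 2 (ι → ℂ)).symm u) ((WithLp.equiv 2 (ι → ℂ)).symm v)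
  rw [norm_eq_sqrt_re_inner (𝕜 := ℂ), norm_eq_sqrt_re_inner (𝕜 := ℂ)] at h
  rw [dotProduct_comm (star u) v, dotProduct_comm (star u) u, dotProduct_comm (star v) v]
  exact h

private lemma diag_conj (U B : Matrix ι ι ℂ) (i : ι) :
    (Uᴴ * B * U) i i =
      dotProduct (star (fun k => U k i)) (B *ᵥ (fun k => U k i)) := by
  simp only [Matrix.mul_apply, Matrix.mulVec, dotProduct, Matrix.conjTranspose_apply,
    Finset.sum_mul, Finset.mul_sum, Pi.star_apply]
  rw [Finset.sum_comm]
  refine Finset.sum_congr rfl fun j _ => Finset.sum_congr rfl fun k _ => by ring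

private lemma matSqrt_eq {A : Matrix ι ι ℂ} (h : A.PosSemidef) : matSqrt A = h.sqrt := by
  unfold matSqrt Matrix.PosSemidef.sqrt; rw [dif_pos h]
  congr!

private lemma traceNorm_eq_sum (A : Matrix ι ι ℂ) :
    traceNorm A = ∑ i,
      Real.sqrt ((Matrix.posSemidef_conjTranspose_mul_self A).1.eigenvalues i) := by
  have h : (Aᴴ * A).PosSemidef := Matrix.posSemidef_conjTranspose_mul_self A
  have h1 : matSqrt (Aᴴ * A) = h.sqrt := matSqrt_eq h
  rw [traceNorm, h1]
  unfold Matrix.PosSemidef.sqrt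
  rw [Matrix.trace_mul_cycle]
  rw [show (star (h.1.eigenvectorUnitary : Matrix ι ι ℂ)) *
      (h.1.eigenvectorUnitary : Matrix ι ι ℂ) = 1 from Unitary.coe_star_mul_self _]
  rw [Matrix.one_mul, Matrix.trace_diagonal, Complex.re_sum]
  simp

private lemma trace_re_le_traceNorm (A M : Matrix ι ι ℂ) (hM : (1 - M * Mᴴ).PosSemidef) :
    (M * A).trace.re ≤ traceNorm A := by
  classical
  have h : (Aᴴ * A).PosSemidef := Matrix.posSemidef_conjTranspose_mul_self A
  set U : Matrix ι ι ℂ := (h.1.eigenvectorUnitary : Matrix ι ι ℂ) with hUdef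
  have hUU : Uᴴ * U = 1 := by
    rw [← Matrix.star_eq_conjTranspose]; exact Unitary.coe_star_mul_self _
  have hUU' : U * Uᴴ = 1 := by
    rw [← Matrix.star_eq_conjTranspose]; exact Unitary.coe_mul_star_self _
  have htr : (M * A).trace = (Uᴴ * (M * A) * U).trace := by
    rw [Matrix.trace_mul_cycle, ← Matrix.mul_assoc, hUU', Matrix.one_mul]
  have hdiag : ∀ i, ((Uᴴ * (M * A) * U) i i).re ≤ Real.sqrt (h.1.eigenvalues i) := by
    intro i
    set x : ι → ℂ := fun k => U k i with hx
    have e1 : (Uᴴ * (M * A) * U) i i = dotProduct (star (Mᴴ *ᵥ x)) (A *ᵥ x) := by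
      rw [diag_conj, Matrix.star_mulVec, Matrix.conjTranspose_conjTranspose,
        ← Matrix.dotProduct_mulVec, Matrix.mulVec_mulVec]
    have hxx : dotProduct (star x) x = 1 := by
      have hd := diag_conj U 1 i
      rw [Matrix.mul_one, hUU, Matrix.one_mulVec] at hd
      rw [← hd, Matrix.one_apply_eq]
    have e2 : (dotProduct (star (Mᴴ *ᵥ x)) (Mᴴ *ᵥ x)).re ≤ 1 := by
      have e3 : dotProduct (star (Mᴴ *ᵥ x)) (Mᴴ *ᵥ x) =
          dotProduct (star x) ((M * Mᴴ) *ᵥ x) := by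
        rw [Matrix.star_mulVec, Matrix.conjTranspose_conjTranspose,
          ← Matrix.dotProduct_mulVec, Matrix.mulVec_mulVec]
      have key := hM.dotProduct_mulVec_nonneg x
      rw [Matrix.sub_mulVec, dotProduct_sub, Matrix.one_mulVec, hxx] at key
      have key2 := (Complex.le_def.mp key).1
      rw [e3]
      simp only [Complex.zero_re, Complex.sub_re, Complex.one_re] at key2
      linarith
    have e4 : (dotProduct (star (A *ᵥ x)) (A *ᵥ x)).re = h.1.eigenvalues i := by
      have e5 : dotProduct (star (A *ᵥ x)) (A *ᵥ x) =
          dotProduct (star x) ((Aᴴ * A) *ᵥ x) := by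
        rw [Matrix.star_mulVec, ← Matrix.dotProduct_mulVec, Matrix.mulVec_mulVec]
      have hd := diag_conj U (Aᴴ * A) i
      rw [show Uᴴ * (Aᴴ * A) * U = Matrix.diagonal (RCLike.ofReal ∘ h.1.eigenvalues) by
        rw [← Matrix.star_eq_conjTranspose]; have hc := h.1.conjStarAlgAut_star_eigenvectorUnitary
        rw [Unitary.conjStarAlgAut_star_apply] at hc; exact hc] at hd
      rw [e5, ← hd, Matrix.diagonal_apply_eq]
      rfl
    calc ((Uᴴ * (M * A) * U) i i).re
        = (dotProduct (star (Mᴴ *ᵥ x)) (A *ᵥ x)).re := by rw [e1]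
      _ ≤ Real.sqrt (dotProduct (star (Mᴴ *ᵥ x)) (Mᴴ *ᵥ x)).re *
            Real.sqrt (dotProduct (star (A *ᵥ x)) (A *ᵥ x)).re := dot_re_le _ _
      _ ≤ 1 * Real.sqrt (h.1.eigenvalues i) := by
          rw [e4]
          exact mul_le_mul_of_nonneg_right (Real.sqrt_le_one.mpr e2) (Real.sqrt_nonneg _)
      _ = Real.sqrt (h.1.eigenvalues i) := one_mul _
  rw [htr, traceNorm_eq_sum A]
  rw [show (Uᴴ * (M * A) * U).trace = ∑ i, (Uᴴ * (M * A) * U) i i from rfl, Complex.re_sum]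
  exact Finset.sum_le_sum fun i _ => hdiag i

private lemma exists_dual (A : Matrix ι ι ℂ) :
    ∃ M : Matrix ι ι ℂ, (1 - M * Mᴴ).PosSemidef ∧ (M * A).trace.re = traceNorm A := by
  classical
  have h : (Aᴴ * A).PosSemidef := Matrix.posSemidef_conjTranspose_mul_self A
  set U : Matrix ι ι ℂ := (h.1.eigenvectorUnitary : Matrix ι ι ℂ) with hUdef
  set lam : ι → ℝ := h.1.eigenvalues with hlam
  have hUU : Uᴴ * U = 1 := by
    rw [← Matrix.star_eq_conjTranspose]; exact Unitary.coe_star_mul_self _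
  have hUU' : U * Uᴴ = 1 := by
    rw [← Matrix.star_eq_conjTranspose]; exact Unitary.coe_mul_star_self _
  have hlam0 : ∀ i, 0 ≤ lam i := h.eigenvalues_nonneg
  set g : ι → ℂ := fun i => ((Real.sqrt (lam i))⁻¹ : ℝ) with hg
  have collapse : ∀ (D E : Matrix ι ι ℂ),
      (U * D * Uᴴ) * (U * E * Uᴴ) = U * (D * E) * Uᴴ := by
    intro D E
    simp only [Matrix.mul_assoc]
    rw [← Matrix.mul_assoc Uᴴ U, hUU, Matrix.one_mul]
  have hAA : Aᴴ * A = U * Matrix.diagonal (RCLike.ofReal ∘ lam) * Uᴴ := by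
    rw [← Matrix.star_eq_conjTranspose]; exact h.1.spectral_theorem
  have hsg : star g = g := by
    funext i; simp [hg, Complex.conj_ofReal]
  refine ⟨U * Matrix.diagonal g * Uᴴ * Aᴴ, ?_, ?_⟩
  · have hMH : (U * Matrix.diagonal g * Uᴴ * Aᴴ)ᴴ = A * (U * (Matrix.diagonal g * Uᴴ)) := by
      simp only [Matrix.conjTranspose_mul, Matrix.conjTranspose_conjTranspose,
        Matrix.diagonal_conjTranspose, hsg, Matrix.mul_assoc]
    have hMMH : (U * Matrix.diagonal g * Uᴴ * Aᴴ) * (U * Matrix.diagonal g * Uᴴ * Aᴴ)ᴴ =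
        U * (Matrix.diagonal g * (Matrix.diagonal (RCLike.ofReal ∘ lam) * Matrix.diagonal g)) * Uᴴ := by
      rw [hMH]
      have step : (U * Matrix.diagonal g * Uᴴ * Aᴴ) * (A * (U * (Matrix.diagonal g * Uᴴ))) =
          (U * Matrix.diagonal g * Uᴴ) * ((Aᴴ * A) * (U * Matrix.diagonal g * Uᴴ)) := by
        simp only [Matrix.mul_assoc]
      rw [step, hAA, collapse, collapse]
    have hd : Matrix.diagonal g * (Matrix.diagonal (RCLike.ofReal ∘ lam) * Matrix.diagonal g) =
        Matrix.diagonal (fun i => g i * ((RCLike.ofReal ∘ lam) i * g i)) := by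
      rw [Matrix.diagonal_mul_diagonal, Matrix.diagonal_mul_diagonal]
    rw [hMMH, hd]
    have hdd : (1 : Matrix ι ι ℂ) - Matrix.diagonal (fun i => g i * ((RCLike.ofReal ∘ lam) i * g i)) =
        Matrix.diagonal (fun i => 1 - g i * ((RCLike.ofReal ∘ lam) i * g i)) := by
      rw [← Matrix.diagonal_one, Matrix.diagonal_sub]
    have hone : (1 : Matrix ι ι ℂ) -
        U * Matrix.diagonal (fun i => g i * ((RCLike.ofReal ∘ lam) i * g i)) * Uᴴ =
        U * Matrix.diagonal (fun i => 1 - g i * ((RCLike.ofReal ∘ lam) i * g i)) * Uᴴ := by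
      rw [← hdd, Matrix.mul_sub, Matrix.sub_mul, Matrix.mul_one, hUU']
    rw [hone]
    refine (Matrix.posSemidef_diagonal_iff.mpr fun i => ?_).mul_mul_conjTranspose_same U
    have hv : (1:ℂ) - g i * ((RCLike.ofReal ∘ lam) i * g i) =
        ((1 - (Real.sqrt (lam i))⁻¹ * (lam i * (Real.sqrt (lam i))⁻¹) : ℝ) : ℂ) := by
      have rc : (RCLike.ofReal : ℝ → ℂ) = Complex.ofReal := rfl
      simp only [Function.comp_apply, hg, rc]
      push_cast
      ring
    rw [hv, Complex.zero_le_real]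
    rcases eq_or_lt_of_le (hlam0 i) with hz | hp
    · simp [← hz]
    · have hs : Real.sqrt (lam i) > 0 := Real.sqrt_pos.mpr hp
      have : (Real.sqrt (lam i))⁻¹ * (lam i * (Real.sqrt (lam i))⁻¹) = 1 := by
        have hss : Real.sqrt (lam i) * Real.sqrt (lam i) = lam i := Real.mul_self_sqrt (hlam0 i)
        rw [mul_comm (lam i), ← mul_assoc, ← mul_inv, hss]
        exact inv_mul_cancel₀ (ne_of_gt hp)
      rw [this]; norm_num
  · have hMA : (U * Matrix.diagonal g * Uᴴ * Aᴴ) * A =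
        U * (Matrix.diagonal g * Matrix.diagonal (RCLike.ofReal ∘ lam)) * Uᴴ := by
      have step : (U * Matrix.diagonal g * Uᴴ * Aᴴ) * A =
          (U * Matrix.diagonal g * Uᴴ) * (Aᴴ * A) := by simp only [Matrix.mul_assoc]
      rw [step, hAA, collapse]
    have hgl : Matrix.diagonal g * Matrix.diagonal (RCLike.ofReal ∘ lam) =
        Matrix.diagonal ((↑) ∘ Real.sqrt ∘ lam : ι → ℂ) := by
      rw [Matrix.diagonal_mul_diagonal]
      refine congrArg Matrix.diagonal (funext fun i => ?_)
      show g i * (RCLike.ofReal (lam i)) = ((Real.sqrt (lam i) : ℝ) : ℂ)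
      have rc : (RCLike.ofReal : ℝ → ℂ) = Complex.ofReal := rfl
      simp only [hg, rc]
      norm_cast
      rcases eq_or_lt_of_le (hlam0 i) with hz | hp
      · simp [← hz]
      · have hs : Real.sqrt (lam i) ≠ 0 := ne_of_gt (Real.sqrt_pos.mpr hp)
        rw [inv_mul_eq_div, div_eq_iff hs]
        exact (Real.mul_self_sqrt (hlam0 i)).symm
    have hsq : U * Matrix.diagonal ((↑) ∘ Real.sqrt ∘ lam : ι → ℂ) * Uᴴ = h.sqrt := by
      unfold Matrix.PosSemidef.sqrt
      rw [← Matrix.star_eq_conjTranspose]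
      rfl
    rw [hMA, hgl, hsq, traceNorm, matSqrt_eq h]

private lemma traceNorm_sum_le {D : Type*} [Fintype D] (f : D → Matrix ι ι ℂ) :
    traceNorm (∑ d, f d) ≤ ∑ d, traceNorm (f d) := by
  obtain ⟨M, hM, hEq⟩ := exists_dual (∑ d, f d)
  rw [← hEq, Finset.mul_sum, Matrix.trace_sum, Complex.re_sum]
  exact Finset.sum_le_sum fun d _ => trace_re_le_traceNorm (f d) M hM

private lemma traceNorm_congr {A B : Matrix ι ι ℂ} (h : Aᴴ * A = Bᴴ * B) :
    traceNorm A = traceNorm B := by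
  unfold traceNorm; rw [h]

end TraceNormTools

/-- For a decomposition of the identity `∑ W_d = id`,
`∑_d F(W_dᴴ ρ W_d, σ) ≥ F(ρ, σ)`. -/
theorem fidelity_decomposition
    {ι D : Type*} [Fintype ι] [DecidableEq ι] [Fintype D]
    (ρ σ : Matrix ι ι ℂ) (hρ : ρ.PosSemidef) (hσ : σ.PosSemidef)
    (W : D → Matrix ι ι ℂ) (hW : ∑ d, W d = 1) :
    fid ρ σ ≤ ∑ d, fid ((W d)ᴴ * ρ * W d) σ := by
  classical
  have h1 : matSqrt ρ = hρ.sqrt := matSqrt_eq hρ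
  have h2 : matSqrt σ = hσ.sqrt := matSqrt_eq hσ
  have hsplit : matSqrt ρ * matSqrt σ = ∑ d, hρ.sqrt * W d * hσ.sqrt := by
    rw [h1, h2, show hρ.sqrt * hσ.sqrt = hρ.sqrt * (∑ d, W d) * hσ.sqrt by
      rw [hW, Matrix.mul_one], Finset.mul_sum, Finset.sum_mul]
  have hterm : ∀ d, traceNorm (hρ.sqrt * W d * hσ.sqrt) = fid ((W d)ᴴ * ρ * W d) σ := by
    intro d
    have hX : ((W d)ᴴ * ρ * W d).PosSemidef := hρ.conjTranspose_mul_mul_same (W d)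
    have h3 : matSqrt ((W d)ᴴ * ρ * W d) = hX.sqrt := matSqrt_eq hX
    rw [fid, h3, h2]
    apply traceNorm_congr
    rw [Matrix.conjTranspose_mul, Matrix.conjTranspose_mul, Matrix.conjTranspose_mul,
      hρ.posSemidef_sqrt.1.eq, hσ.posSemidef_sqrt.1.eq, hX.posSemidef_sqrt.1.eq]
    calc hσ.sqrt * ((W d)ᴴ * hρ.sqrt) * (hρ.sqrt * W d * hσ.sqrt)
        = hσ.sqrt * ((W d)ᴴ * (hρ.sqrt * (hρ.sqrt * (W d * hσ.sqrt)))) := by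
          simp only [Matrix.mul_assoc]
      _ = hσ.sqrt * ((W d)ᴴ * (ρ * (W d * hσ.sqrt))) := by
          rw [← Matrix.mul_assoc hρ.sqrt hρ.sqrt, hρ.sqrt_mul_self]
      _ = (hσ.sqrt * ((W d)ᴴ * ρ * W d)) * hσ.sqrt := by simp only [Matrix.mul_assoc]
      _ = (hσ.sqrt * (hX.sqrt * hX.sqrt)) * hσ.sqrt := by rw [hX.sqrt_mul_self]
      _ = hσ.sqrt * hX.sqrt * (hX.sqrt * hσ.sqrt) := by simp only [Matrix.mul_assoc]
  calc fid ρ σ = traceNorm (∑ d, hρ.sqrt * W d * hσ.sqrt) := by rw [fid, hsplit]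
    _ ≤ ∑ d, traceNorm (hρ.sqrt * W d * hσ.sqrt) := traceNorm_sum_le _
    _ = ∑ d, fid ((W d)ᴴ * ρ * W d) σ := Finset.sum_congr rfl fun d _ => hterm d


end QMarkov
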